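/- In the motivational example with q a primitive nth root of unity, D₁ is a (σ,1)-skew derivation and D₂ is a (1,σ)-skew derivation of S_q(V)#G: for all a, b in S_q(V)#G, D₁(ab) = D₁(a)σ(b) + a D₁(b) and D₂(ab) = D₂(a)b + σ(a)D₂(b), and σ is an algebra automorphism. -/

import Mathlib

/-- The underlying vector space of `S_q(V)#G` in the motivational example: it has basis
`{w₁ⁱ w₂ʲ w₃ᵐ g}` indexed by `(i,j,m) ∈ ℕ³` and `g = σ₁^a σ₂^b ∈ G = (ℤ/n)²`. -/
abbrev SmashSpace (n : ℕ) := (ℕ × ℕ × ℕ × (ZMod n × ZMod n)) →₀ ℂ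

/-- The quantum integer `(m)_q = 1 + q + ⋯ + q^(m−1)`. -/
noncomputable def qInt (q : ℂ) (m : ℕ) : ℂ := ∑ i ∈ Finset.range m, q ^ i

/-- The character `χ₁ : G → ℂˣ` evaluated at `g⁻¹`, for `g = σ₁^a σ₂^b`: since
`σ₁(w₁) = q w₁` and `σ₂(w₁) = w₁`, we have `χ₁(g) = q^a`, so `χ₁(g⁻¹) = q^((−a).val)`. -/
noncomputable def chi1inv (n : ℕ) (q : ℂ) (g : ZMod n × ZMod n) : ℂ := q ^ (-g.1).val

/-- `D₁` on basis elements: `D₁(w₁ⁱw₂ʲw₃ᵐ g) = (i)_q q^(j+m) χ₁(g⁻¹) w₁^(i−1)w₂ʲw₃ᵐ σ₂ g`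
(a negative exponent is interpreted as `0`; indeed `(0)_q = 0`). -/
noncomputable def D1fun (n : ℕ) (q : ℂ) :
    ℕ × ℕ × ℕ × (ZMod n × ZMod n) → SmashSpace n
  | (i, j, m, (a, b)) =>
      (qInt q i * q ^ (j + m) * chi1inv n q (a, b)) •
        Finsupp.single (i - 1, j, m, (a, b + 1)) 1

/-- `D₂` on basis elements: `D₂(w₁ⁱw₂ʲw₃ᵐ g) = (j)_{q⁻¹} qⁱ w₁ⁱw₂^(j−1)w₃^(m+1) σ₁σ₂⁻¹ g`. -/
noncomputable def D2fun (n : ℕ) (q : ℂ) :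
    ℕ × ℕ × ℕ × (ZMod n × ZMod n) → SmashSpace n
  | (i, j, m, (a, b)) =>
      (qInt q⁻¹ j * q ^ i) • Finsupp.single (i, j - 1, m + 1, (a + 1, b - 1)) 1

/-- `σ` on basis elements: `σ(w₁ⁱw₂ʲw₃ᵐ g) = qⁱ χ₁(g⁻¹) w₁ⁱw₂ʲw₃ᵐ g`. -/
noncomputable def sigmafun (n : ℕ) (q : ℂ) :
    ℕ × ℕ × ℕ × (ZMod n × ZMod n) → SmashSpace n
  | (i, j, m, (a, b)) =>
      (q ^ i * chi1inv n q (a, b)) • Finsupp.single (i, j, m, (a, b)) 1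

/-- The `ℂ`-linear extension of a map defined on the monomial basis. -/
noncomputable def extend (n : ℕ)
    (f : ℕ × ℕ × ℕ × (ZMod n × ZMod n) → SmashSpace n) :
    SmashSpace n →ₗ[ℂ] SmashSpace n :=
  Finsupp.lsum ℂ fun p => LinearMap.toSpanSingleton ℂ (SmashSpace n) (f p)

/-- The smash product multiplication on basis elements:
`(w₁ⁱw₂ʲw₃ᵐ # σ₁^a σ₂^b)·(w₁^{i'}w₂^{j'}w₃^{m'} # σ₁^{a'}σ₂^{b'})
 = χ₁(g)^{i'} χ₂(g)^{j'} χ₃(g)^{m'} · q^{-i'(j+m)} · w₁^{i+i'}w₂^{j+j'}w₃^{m+m'} # (gg')`,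
using `χ₁(g) = q^a`, `χ₂(g) = q^b`, `χ₃(g) = q^{a+b}` and the commutation relations
`w₂w₁ = q⁻¹w₁w₂`, `w₃w₁ = q⁻¹w₁w₃`, `w₃w₂ = w₂w₃`. -/
noncomputable def mulfun (n : ℕ) (q : ℂ) :
    ℕ × ℕ × ℕ × (ZMod n × ZMod n) → ℕ × ℕ × ℕ × (ZMod n × ZMod n) → SmashSpace n
  | (i, j, m, (a, b)), (i', j', m', (a', b')) =>
      (q ^ (a.val * i' + b.val * j' + (a.val + b.val) * m') * q⁻¹ ^ (i' * (j + m))) •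
        Finsupp.single (i + i', j + j', m + m', (a + a', b + b')) 1

/-- The bilinear extension of `mulfun`: the multiplication of `S_q(V)#G`. -/
noncomputable def smul2 (n : ℕ) (q : ℂ) :
    SmashSpace n →ₗ[ℂ] SmashSpace n →ₗ[ℂ] SmashSpace n :=
  Finsupp.lsum ℂ fun p => LinearMap.toSpanSingleton ℂ (SmashSpace n →ₗ[ℂ] SmashSpace n)
    (Finsupp.lsum ℂ fun p' => LinearMap.toSpanSingleton ℂ (SmashSpace n) (mulfun n q p p'))


section
variable {n : ℕ} {q : ℂ}

lemma pow_mod_n (hq : q ^ n = 1) (k : ℕ) : q ^ (k % n) = q ^ k := by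
  conv_rhs => rw [← Nat.mod_add_div k n, pow_add, pow_mul, hq, one_pow, mul_one]

lemma pow_val_add (hn : n ≠ 0) (hq : q ^ n = 1) (x y : ZMod n) :
    q ^ (x + y).val = q ^ x.val * q ^ y.val := by
  haveI : NeZero n := ⟨hn⟩
  rw [ZMod.val_add, pow_mod_n hq, pow_add]

lemma pow_val_neg (hn : n ≠ 0) (hq : q ^ n = 1) (x : ZMod n) :
    q ^ (-x).val = (q ^ x.val)⁻¹ := by
  haveI : NeZero n := ⟨hn⟩
  have h := pow_val_add hn hq (-x) x
  rw [neg_add_cancel, ZMod.val_zero, pow_zero] at h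
  exact eq_inv_of_mul_eq_one_left h.symm

lemma pow_val_one (hn : 2 ≤ n) : q ^ ((1 : ZMod n)).val = q := by
  rw [ZMod.val_one_eq_one_mod, Nat.mod_eq_of_lt (by omega), pow_one]

lemma qInt_add (Q : ℂ) (i i' : ℕ) : qInt Q (i + i') = qInt Q i * Q ^ i' + qInt Q i' := by
  by_cases h : Q = 1
  · simp [qInt, h]
  · simp only [qInt, geom_sum_eq h]
    have h1 : Q - 1 ≠ 0 := sub_ne_zero.mpr h
    field_simp
    ring

lemma qInt_zero (Q : ℂ) : qInt Q 0 = 0 := by simp [qInt]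

lemma extend_single (f : ℕ × ℕ × ℕ × (ZMod n × ZMod n) → SmashSpace n) (p) (c : ℂ) :
    extend n f (Finsupp.single p c) = c • f p := by
  simp [extend]

lemma smul2_single_single (p p' : ℕ × ℕ × ℕ × (ZMod n × ZMod n)) (c d : ℂ) :
    smul2 n q (Finsupp.single p c) (Finsupp.single p' d) = c • d • mulfun n q p p' := by
  simp [smul2]

lemma key1 (hn : 2 ≤ n) (hqn : q ^ n = 1) (hq0 : q ≠ 0)
    (i j m : ℕ) (a b : ZMod n) (i' j' m' : ℕ) (a' b' : ZMod n) :
    extend n (D1fun n q) (mulfun n q (i,j,m,(a,b)) (i',j',m',(a',b'))) =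
      smul2 n q (D1fun n q (i,j,m,(a,b))) (sigmafun n q (i',j',m',(a',b'))) +
      smul2 n q (Finsupp.single (i,j,m,(a,b)) 1) (D1fun n q (i',j',m',(a',b'))) := by
  have hn0 : n ≠ 0 := by omega
  have h1v : ((1 : ZMod n)).val = 1 := by
    rw [ZMod.val_one_eq_one_mod, Nat.mod_eq_of_lt (by omega)]
  have hb1 : q ^ ((b+1 : ZMod n)).val = q ^ b.val * q := by
    rw [pow_val_add hn0 hqn, pow_val_one hn]
  have hE : q ^ (a.val + j + m) * q⁻¹ ^ (a.val + j + m) = 1 := by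
    rw [← mul_pow, mul_inv_cancel₀ hq0, one_pow]
  simp only [D1fun, sigmafun, mulfun, map_smul, LinearMap.smul_apply, extend_single,
    smul2_single_single, smul_smul, one_mul, mul_one, one_smul, chi1inv]
  obtain _ | s := i <;> obtain _ | k := i'
  · simp [qInt_zero]
  · -- i = 0, i' = k+1
    simp only [qInt_zero, zero_mul, mul_zero, zero_smul, zero_add, add_zero,
      Nat.add_sub_cancel, Nat.zero_add]
    rw [← add_assoc b b' 1]
    congr 1
    simp only [neg_add, pow_val_add hn0 hqn, pow_val_neg hn0 hqn, hb1, h1v, pow_add,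
      pow_mul, mul_pow, mul_one, pow_one, one_pow, one_mul]
    linear_combination (qInt q (k+1) * q ^ (j' + m') * (q ^ a'.val)⁻¹ *
      (q ^ (a.val * k + b.val * j' + (a.val + b.val) * m') * q⁻¹ ^ (k * (j + m)))) * hE
  · -- i = s+1, i' = 0
    simp only [qInt_zero, zero_mul, mul_zero, zero_smul, zero_add, add_zero,
      Nat.add_sub_cancel, Nat.mul_zero, Nat.zero_mul]
    rw [add_right_comm b 1 b']
    congr 1
    simp only [neg_add, pow_val_add hn0 hqn, pow_val_neg hn0 hqn, hb1, h1v, pow_add,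
      pow_mul, mul_pow, mul_one, pow_one, one_pow, one_mul, pow_zero]
    ring
  · -- i = s+1, i' = k+1
    have e1 : s + 1 + (k + 1) - 1 = s + 1 + k := by omega
    have e2 : s + 1 - 1 + (k + 1) = s + 1 + k := by omega
    have e3 : s + 1 + (k + 1 - 1) = s + 1 + k := by omega
    rw [e1, e2, e3, add_right_comm b 1 b', ← add_assoc b b' 1, ← add_smul]
    congr 1
    rw [qInt_add q (s+1) (k+1)]
    simp only [Nat.add_sub_cancel, neg_add, pow_val_add hn0 hqn, pow_val_neg hn0 hqn, hb1, h1v, pow_add,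
      pow_mul, mul_pow, mul_one, pow_one, one_pow, one_mul]
    linear_combination (qInt q (k+1) * q ^ (j' + m') * (q ^ a'.val)⁻¹ *
      (q ^ (a.val * k + b.val * j' + (a.val + b.val) * m') * q⁻¹ ^ (k * (j + m)))) * hE

lemma key2 (hn : 2 ≤ n) (hqn : q ^ n = 1) (hq0 : q ≠ 0)
    (i j m : ℕ) (a b : ZMod n) (i' j' m' : ℕ) (a' b' : ZMod n) :
    extend n (D2fun n q) (mulfun n q (i,j,m,(a,b)) (i',j',m',(a',b'))) =
      smul2 n q (D2fun n q (i,j,m,(a,b))) (Finsupp.single (i',j',m',(a',b')) 1) +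
      smul2 n q (sigmafun n q (i,j,m,(a,b))) (D2fun n q (i',j',m',(a',b'))) := by
  have hn0 : n ≠ 0 := by omega
  have h1v : ((1 : ZMod n)).val = 1 := by
    rw [ZMod.val_one_eq_one_mod, Nat.mod_eq_of_lt (by omega)]
  have ha1 : q ^ ((a+1 : ZMod n)).val = q ^ a.val * q := by
    rw [pow_val_add hn0 hqn, pow_val_one hn]
  have hbm1 : q ^ ((b-1 : ZMod n)).val = q ^ b.val * q⁻¹ := by
    have h := pow_val_add hn0 hqn (b-1) 1
    rw [sub_add_cancel, pow_val_one hn] at h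
    rw [eq_mul_inv_iff_mul_eq₀ hq0]
    exact h.symm
  have hE1 : ∀ e : ℕ, q ^ e * q⁻¹ ^ e = 1 := fun e => by
    rw [← mul_pow, mul_inv_cancel₀ hq0, one_pow]
  have hE2 : q ^ a.val * (q ^ a.val)⁻¹ = 1 := mul_inv_cancel₀ (pow_ne_zero _ hq0)
  simp only [D2fun, sigmafun, mulfun, map_smul, LinearMap.smul_apply, extend_single,
    smul2_single_single, smul_smul, one_mul, mul_one, one_smul, chi1inv]
  obtain _ | s := j <;> obtain _ | k := j'
  · simp [qInt_zero]
  · -- j = 0, j' = k+1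
    simp only [qInt_zero, zero_mul, mul_zero, zero_smul, zero_add, add_zero,
      Nat.add_sub_cancel, Nat.zero_add]
    have e1 : m + (m' + 1) = m + m' + 1 := by omega
    rw [e1, ← add_assoc a a' 1, ← add_sub_assoc b b' 1]
    congr 1
    simp only [Nat.add_sub_cancel, neg_add, pow_val_add hn0 hqn, pow_val_neg hn0 hqn,
      ha1, hbm1, h1v, pow_add, pow_mul, mul_pow, mul_one, pow_one, one_pow, one_mul]
    linear_combination
      (-(qInt q⁻¹ (k+1) * q^(i+i') *
          q ^ (a.val * i' + b.val * (k+1) + (a.val+b.val)*m') * q⁻¹ ^ (i' * m))) * hE2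
  · -- j = s+1, j' = 0
    simp only [qInt_zero, zero_mul, mul_zero, zero_smul, zero_add, add_zero,
      Nat.add_sub_cancel, Nat.mul_zero, Nat.zero_mul]
    have e1 : m + 1 + m' = m + m' + 1 := by omega
    rw [e1, add_right_comm a 1 a', sub_add_eq_add_sub b 1 b']
    congr 1
    simp only [Nat.add_sub_cancel, neg_add, pow_val_add hn0 hqn, pow_val_neg hn0 hqn,
      ha1, hbm1, h1v, pow_add, pow_mul, mul_pow, mul_one, pow_one, one_pow, one_mul]
    linear_combination
      (-(qInt q⁻¹ (s+1) * q^(i+i') *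
          q ^ (a.val * i' + (a.val+b.val)*m') * q⁻¹ ^ (i' * (s+1+m)))) * hE1 m'
  · -- j = s+1, j' = k+1
    have e1 : s + 1 + (k + 1) - 1 = s + 1 + k := by omega
    have e2 : s + 1 - 1 + (k + 1) = s + 1 + k := by omega
    have e3 : s + 1 + (k + 1 - 1) = s + 1 + k := by omega
    have e4 : m + 1 + m' = m + m' + 1 := by omega
    have e5 : m + (m' + 1) = m + m' + 1 := by omega
    rw [e1, e2, e3, e4, e5, add_right_comm a 1 a', ← add_assoc a a' 1,
      sub_add_eq_add_sub b 1 b', ← add_sub_assoc b b' 1, ← add_smul]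
    congr 1
    rw [qInt_add q⁻¹ (s+1) (k+1)]
    simp only [Nat.add_sub_cancel, neg_add, pow_val_add hn0 hqn, pow_val_neg hn0 hqn,
      ha1, hbm1, h1v, pow_add, pow_mul, mul_pow, mul_one, pow_one, one_pow, one_mul]
    linear_combination
      (-(qInt q⁻¹ (s+1) * q⁻¹^(k+1) * q^(i+i') *
          q ^ (a.val * i' + b.val * (k+1) + (a.val+b.val)*m') * q⁻¹ ^ (i' * (s+1+m)))) * hE1 m' +
      (-(qInt q⁻¹ (k+1) * q^(i+i') *
          q ^ (a.val * i' + b.val * (k+1) + (a.val+b.val)*m') * q⁻¹ ^ (i' * (s+1+m)))) * hE2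

lemma key3 (hqn : q ^ n = 1) (hn0 : n ≠ 0)
    (i j m : ℕ) (a b : ZMod n) (i' j' m' : ℕ) (a' b' : ZMod n) :
    extend n (sigmafun n q) (mulfun n q (i,j,m,(a,b)) (i',j',m',(a',b'))) =
      smul2 n q (sigmafun n q (i,j,m,(a,b))) (sigmafun n q (i',j',m',(a',b'))) := by
  simp only [sigmafun, mulfun, map_smul, LinearMap.smul_apply, extend_single,
    smul2_single_single, smul_smul, one_mul, mul_one, one_smul, chi1inv]
  congr 1
  simp only [neg_add, pow_val_add hn0 hqn, pow_val_neg hn0 hqn, pow_add]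
  ring

noncomputable def invsigmafun (n : ℕ) (q : ℂ) :
    ℕ × ℕ × ℕ × (ZMod n × ZMod n) → SmashSpace n :=
  fun p => (q ^ p.1 * chi1inv n q p.2.2.2)⁻¹ • Finsupp.single p 1

lemma sig_ne (hq0 : q ≠ 0) (p : ℕ × ℕ × ℕ × (ZMod n × ZMod n)) :
    q ^ p.1 * chi1inv n q p.2.2.2 ≠ 0 :=
  mul_ne_zero (pow_ne_zero _ hq0) (pow_ne_zero _ hq0)

lemma sigmafun_eq (p : ℕ × ℕ × ℕ × (ZMod n × ZMod n)) :
    sigmafun n q p = (q ^ p.1 * chi1inv n q p.2.2.2) • Finsupp.single p 1 := by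
  obtain ⟨i, j, m, a, b⟩ := p
  rfl

lemma sigma_left_inv (hq0 : q ≠ 0) (x : SmashSpace n) :
    extend n (invsigmafun n q) (extend n (sigmafun n q) x) = x := by
  induction x using Finsupp.induction_linear with
  | zero => simp
  | add f g hf hg => simp [hf, hg]
  | single p c =>
    have hB : chi1inv n q p.2.2.2 ≠ 0 := pow_ne_zero _ hq0
    simp only [extend_single, sigmafun_eq, invsigmafun, map_smul, smul_smul,
      Finsupp.smul_single, smul_eq_mul, mul_one]
    congr 1
    field_simp

lemma sigma_right_inv (hq0 : q ≠ 0) (x : SmashSpace n) :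
    extend n (sigmafun n q) (extend n (invsigmafun n q) x) = x := by
  induction x using Finsupp.induction_linear with
  | zero => simp
  | add f g hf hg => simp [hf, hg]
  | single p c =>
    have hB : chi1inv n q p.2.2.2 ≠ 0 := pow_ne_zero _ hq0
    simp only [extend_single, sigmafun_eq, invsigmafun, map_smul, smul_smul,
      Finsupp.smul_single, smul_eq_mul, mul_one]
    congr 1
    field_simp

lemma single_eq_smul (p : ℕ × ℕ × ℕ × (ZMod n × ZMod n)) (c : ℂ) :
    Finsupp.single p c = c • Finsupp.single p (1 : ℂ) := by
  rw [Finsupp.smul_single, smul_eq_mul, mul_one]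

end


/-- In the motivational example, `D₁` is a `(σ,1)`-skew derivation, `D₂` is a
`(1,σ)`-skew derivation of `S_q(V)#G`, and `σ` is an algebra automorphism: for all
`a, b ∈ S_q(V)#G`, `D₁(ab) = D₁(a)σ(b) + a D₁(b)`, `D₂(ab) = D₂(a)b + σ(a)D₂(b)`,
`σ(ab) = σ(a)σ(b)`, `σ(1) = 1`, and `σ` is bijective. -/
theorem motivational_skew_derivations
    (n : ℕ) (hn : 2 ≤ n) (q : ℂ) (hq : IsPrimitiveRoot q n) :
    (∀ a b : SmashSpace n,
      extend n (D1fun n q) (smul2 n q a b) =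
        smul2 n q (extend n (D1fun n q) a) (extend n (sigmafun n q) b) +
          smul2 n q a (extend n (D1fun n q) b)) ∧
    (∀ a b : SmashSpace n,
      extend n (D2fun n q) (smul2 n q a b) =
        smul2 n q (extend n (D2fun n q) a) b +
          smul2 n q (extend n (sigmafun n q) a) (extend n (D2fun n q) b)) ∧
    (∀ a b : SmashSpace n,
      extend n (sigmafun n q) (smul2 n q a b) =
        smul2 n q (extend n (sigmafun n q) a) (extend n (sigmafun n q) b)) ∧
    extend n (sigmafun n q) (Finsupp.single (0, 0, 0, (0, 0)) 1) =
      Finsupp.single (0, 0, 0, (0, 0)) 1 ∧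
    Function.Bijective (extend n (sigmafun n q)) := by
  have hn0 : n ≠ 0 := by omega
  have hqn : q ^ n = 1 := hq.pow_eq_one
  have hq0 : q ≠ 0 := by
    intro h
    rw [h, zero_pow hn0] at hqn
    exact zero_ne_one hqn
  refine ⟨?_, ?_, ?_, ?_, ?_⟩
  · intro x y
    induction x using Finsupp.induction_linear with
    | zero => simp
    | add f g hf hg => simp only [map_add, LinearMap.add_apply, hf, hg]; abel
    | single p c =>
      induction y using Finsupp.induction_linear with
      | zero => simp
      | add f g hf hg => simp only [map_add, LinearMap.add_apply, hf, hg]; abel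
      | single p' d =>
        obtain ⟨i, j, m, a, b⟩ := p
        obtain ⟨i', j', m', a', b'⟩ := p'
        rw [smul2_single_single, extend_single, extend_single, extend_single,
          single_eq_smul (i, j, m, (a, b)) c]
        simp only [map_smul, LinearMap.smul_apply, smul_smul, mul_comm d c, ← smul_add]
        rw [key1 hn hqn hq0 i j m a b i' j' m' a' b']
  · intro x y
    induction x using Finsupp.induction_linear with
    | zero => simp
    | add f g hf hg => simp only [map_add, LinearMap.add_apply, hf, hg]; abel
    | single p c =>
      induction y using Finsupp.induction_linear with
      | zero => simp
      | add f g hf hg => simp only [map_add, LinearMap.add_apply, hf, hg]; abel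
      | single p' d =>
        obtain ⟨i, j, m, a, b⟩ := p
        obtain ⟨i', j', m', a', b'⟩ := p'
        rw [smul2_single_single, extend_single, extend_single, extend_single,
          single_eq_smul (i', j', m', (a', b')) d]
        simp only [map_smul, LinearMap.smul_apply, smul_smul, mul_comm d c, ← smul_add]
        rw [key2 hn hqn hq0 i j m a b i' j' m' a' b']
  · intro x y
    induction x using Finsupp.induction_linear with
    | zero => simp
    | add f g hf hg => simp only [map_add, LinearMap.add_apply, hf, hg]
    | single p c =>
      induction y using Finsupp.induction_linear with
      | zero => simp
      | add f g hf hg => simp only [map_add, LinearMap.add_apply, hf, hg]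
      | single p' d =>
        obtain ⟨i, j, m, a, b⟩ := p
        obtain ⟨i', j', m', a', b'⟩ := p'
        rw [smul2_single_single, extend_single, extend_single]
        simp only [map_smul, LinearMap.smul_apply, smul_smul, mul_comm d c]
        rw [key3 hqn hn0 i j m a b i' j' m' a' b']
  · rw [extend_single, sigmafun_eq]
    simp [chi1inv]
  · exact Function.bijective_iff_has_inverse.mpr
      ⟨extend n (invsigmafun n q), sigma_left_inv hq0, sigma_right_inv hq0⟩
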